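/- Let H be an infinite dimensional Hilbert space and X a g-tuple of bounded self-adjoint operators on H such that every nontrivial reducing subspace of X is infinite dimensional. Then for every positive integer N, every nontrivial reducing subspace of the tuple I_N ⊗ X on H^N is infinite dimensional. -/

import Mathlib

set_option maxHeartbeats 1000000
set_option synthInstance.maxHeartbeats 400000

instance piLpCompleteSpace {ι : Type*} [Fintype ι] (β : ι → Type*)
    [∀ i, UniformSpace (β i)] [∀ i, CompleteSpace (β i)] : CompleteSpace (PiLp 2 β) :=
  (inferInstance : CompleteSpace (PiLp 2 β))

/-- Finite amplification `I_m ⊗ X` acting on `E^m = PiLp 2 (fun _ : Fin m => E)`. -/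
noncomputable def amp {E : Type*} [NormedAddCommGroup E] [InnerProductSpace ℂ E]
    (m : ℕ) (X : E →L[ℂ] E) :
    PiLp 2 (fun _ : Fin m => E) →L[ℂ] PiLp 2 (fun _ : Fin m => E) :=
  ((PiLp.continuousLinearEquiv 2 ℂ (fun _ : Fin m => E)).symm.toContinuousLinearMap).comp
    ((ContinuousLinearMap.pi fun k => X.comp (ContinuousLinearMap.proj k)).comp
      (PiLp.continuousLinearEquiv 2 ℂ (fun _ : Fin m => E)).toContinuousLinearMap)

/-- Membership in the noncommutative convex hull `K_X`: the tuple `Y` (of operators on a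
Hilbert space `E`, e.g. `E = H_n`) has the form `V* (I_H ⊗ X) V` for an isometry
`V : E → H^∞`, where `H^∞ = ℓ²(ℕ, H)` and `I_H ⊗ X` is the operator acting
componentwise as `X i` on `H^∞`. -/
noncomputable def InKX {H : Type*} [NormedAddCommGroup H] [InnerProductSpace ℂ H]
    [CompleteSpace H] {g : ℕ} (X : Fin g → H →L[ℂ] H)
    {E : Type*} [NormedAddCommGroup E] [InnerProductSpace ℂ E] [CompleteSpace E]
    (Y : Fin g → E →L[ℂ] E) : Prop :=
  ∃ V : E →L[ℂ] lp (fun _ : ℕ => H) 2,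
    (∀ x, ‖V x‖ = ‖x‖) ∧
    ∀ i, ∃ XA : lp (fun _ : ℕ => H) 2 →L[ℂ] lp (fun _ : ℕ => H) 2,
      (∀ (v : lp (fun _ : ℕ => H) 2) (k : ℕ), XA v k = X i (v k)) ∧
      Y i = ((ContinuousLinearMap.adjoint V).comp (XA.comp V))

/-- `0` is in the finite interior of `K_X`: there are `d ∈ ℕ` and a unit vector
`v ∈ H^d` with `v* (I_d ⊗ X) v = 0 ∈ ℝ^g`. -/
noncomputable def ZeroFinInt {H : Type*} [NormedAddCommGroup H] [InnerProductSpace ℂ H]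
    {g : ℕ} (X : Fin g → H →L[ℂ] H) : Prop :=
  ∃ d : ℕ, 0 < d ∧ ∃ v : PiLp 2 (fun _ : Fin d => H), ‖v‖ = 1 ∧
    ∀ i, (inner ℂ (amp d (X i) v) v : ℂ) = 0

/-- Direct sum `A ⊕ B` of operators, acting on the Hilbert space direct sum
`E ⊕ F = WithLp 2 (E × F)`. -/
noncomputable def dsum {E F : Type*} [NormedAddCommGroup E] [InnerProductSpace ℂ E]
    [NormedAddCommGroup F] [InnerProductSpace ℂ F]
    (A : E →L[ℂ] E) (B : F →L[ℂ] F) : WithLp 2 (E × F) →L[ℂ] WithLp 2 (E × F) :=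
  ((WithLp.prodContinuousLinearEquiv 2 ℂ E F).symm.toContinuousLinearMap).comp
    ((A.prodMap B).comp (WithLp.prodContinuousLinearEquiv 2 ℂ E F).toContinuousLinearMap)

/-- Lemma 4.1: if every nontrivial reducing subspace of the tuple `X` of
bounded self-adjoint operators on an infinite dimensional Hilbert space `H` is infinite
dimensional, then for every `N`, every nontrivial reducing subspace of `I_N ⊗ X` on
`H^N` is infinite dimensional. -/
theorem amplification_reducing_infinite_dimensional
    {H : Type*} [NormedAddCommGroup H] [InnerProductSpace ℂ H] [CompleteSpace H]
    (hHinf : ¬ FiniteDimensional ℂ H)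
    {g : ℕ} (X : Fin g → H →L[ℂ] H) (hXsa : ∀ i, IsSelfAdjoint (X i))
    (hred : ∀ W : Submodule ℂ H, IsClosed (W : Set H) →
      (∀ i, ∀ v ∈ W, X i v ∈ W) → W ≠ ⊥ → ¬ FiniteDimensional ℂ W) :
    ∀ N : ℕ, 0 < N →
      ∀ W : Submodule ℂ (PiLp 2 (fun _ : Fin N => H)), IsClosed (W : Set (PiLp 2 (fun _ : Fin N => H))) →
        (∀ i, ∀ v ∈ W, amp N (X i) v ∈ W) → W ≠ ⊥ → ¬ FiniteDimensional ℂ W := by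
  intro N hN W hWclosed hWinv hWne hWfd
  obtain ⟨w, hwW, hw0⟩ := Submodule.exists_mem_ne_zero_of_ne_bot hWne
  obtain ⟨k, hk⟩ : ∃ k, w k ≠ 0 := by
    by_contra h
    push_neg at h
    exact hw0 (PiLp.ext h)
  -- coordinate projection as a linear map
  let P : PiLp 2 (fun _ : Fin N => H) →ₗ[ℂ] H :=
    { toFun := fun v => v k
      map_add' := fun _ _ => rfl
      map_smul' := fun _ _ => rfl }
  let U : Submodule ℂ H := W.map P
  have hUfd : FiniteDimensional ℂ U := Module.Finite.map W P
  have hamp : ∀ i (v : PiLp 2 (fun _ : Fin N => H)), amp N (X i) v k = X i (v k) :=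
    fun i v => rfl
  refine hred U (Submodule.closed_of_finiteDimensional U) ?_ ?_ hUfd
  · rintro i u ⟨v, hvW, rfl⟩
    exact ⟨amp N (X i) v, hWinv i v hvW, (hamp i v).symm⟩
  · intro hU
    apply hk
    have : P w ∈ U := ⟨w, hwW, rfl⟩
    rw [hU, Submodule.mem_bot] at this
    exact this
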